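/- In intuitionistic propositional logic extended with the linearity axiom scheme LIN, for all formulas γ, δ₁, δ₂ the formula (γ → (δ₁ ∨ δ₂)) → ((γ → δ₁) ∨ (γ → δ₂)) is provable. -/
import Mathlib


/-- Propositional formulas over countably many atoms with `→`, `∧`, `∨`, `⊥`. -/
inductive PForm : Type
  | atom : ℕ → PForm
  | bot : PForm
  | imp : PForm → PForm → PForm
  | and : PForm → PForm → PForm
  | or : PForm → PForm → PForm

open PForm

/-- Hilbert-style provability for intuitionistic propositional logic,
extended by an arbitrary set `Ax` of extra axioms, with modus ponens as the
only inference rule. -/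
inductive HilbertProv (Ax : PForm → Prop) : PForm → Prop
  | extra {φ} : Ax φ → HilbertProv Ax φ
  | k (φ ψ) : HilbertProv Ax (imp φ (imp ψ φ))
  | s (φ ψ χ) : HilbertProv Ax
      (imp (imp φ (imp ψ χ)) (imp (imp φ ψ) (imp φ χ)))
  | andIntro (φ ψ) : HilbertProv Ax (imp φ (imp ψ (and φ ψ)))
  | andElimL (φ ψ) : HilbertProv Ax (imp (and φ ψ) φ)
  | andElimR (φ ψ) : HilbertProv Ax (imp (and φ ψ) ψ)
  | orIntroL (φ ψ) : HilbertProv Ax (imp φ (or φ ψ))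
  | orIntroR (φ ψ) : HilbertProv Ax (imp ψ (or φ ψ))
  | orElim (φ ψ χ) : HilbertProv Ax
      (imp (imp φ χ) (imp (imp ψ χ) (imp (or φ ψ) χ)))
  | exFalso (φ) : HilbertProv Ax (imp bot φ)
  | mp {φ ψ} : HilbertProv Ax (imp φ ψ) → HilbertProv Ax φ → HilbertProv Ax ψ

/-- The linearity axiom scheme LIN: all formulas of the form
`(φ → ψ) ∨ (ψ → φ)`. -/
def LINScheme : PForm → Prop :=
  fun f => ∃ φ ψ : PForm, f = or (imp φ ψ) (imp ψ φ)

namespace HilbertAux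

/-- Extend an axiom set by one formula. -/
def Add (Ax : PForm → Prop) (φ : PForm) : PForm → Prop := fun f => Ax f ∨ f = φ

theorem mono {Ax Ax' : PForm → Prop} (h : ∀ f, Ax f → Ax' f) {ψ : PForm}
    (hp : HilbertProv Ax ψ) : HilbertProv Ax' ψ := by
  induction hp with
  | extra ha => exact HilbertProv.extra (h _ ha)
  | k φ ψ => exact HilbertProv.k φ ψ
  | s φ ψ χ => exact HilbertProv.s φ ψ χ
  | andIntro φ ψ => exact HilbertProv.andIntro φ ψ
  | andElimL φ ψ => exact HilbertProv.andElimL φ ψ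
  | andElimR φ ψ => exact HilbertProv.andElimR φ ψ
  | orIntroL φ ψ => exact HilbertProv.orIntroL φ ψ
  | orIntroR φ ψ => exact HilbertProv.orIntroR φ ψ
  | orElim φ ψ χ => exact HilbertProv.orElim φ ψ χ
  | exFalso φ => exact HilbertProv.exFalso φ
  | mp _ _ ih1 ih2 => exact HilbertProv.mp ih1 ih2

theorem weaken {Ax : PForm → Prop} {φ ψ : PForm} (hp : HilbertProv Ax ψ) :
    HilbertProv (Add Ax φ) ψ := mono (fun _ h => Or.inl h) hp

theorem ident (Ax : PForm → Prop) (φ : PForm) : HilbertProv Ax (imp φ φ) :=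
  HilbertProv.mp (HilbertProv.mp (HilbertProv.s φ (imp φ φ) φ) (HilbertProv.k φ (imp φ φ)))
    (HilbertProv.k φ φ)

theorem hyp (Ax : PForm → Prop) (φ : PForm) : HilbertProv (Add Ax φ) φ :=
  HilbertProv.extra (Or.inr rfl)

/-- Deduction theorem. -/
theorem deduction {Ax : PForm → Prop} {φ ψ : PForm}
    (h : HilbertProv (Add Ax φ) ψ) : HilbertProv Ax (imp φ ψ) := by
  induction h with
  | @extra f ha =>
    rcases ha with ha | rfl
    · exact HilbertProv.mp (HilbertProv.k f φ) (HilbertProv.extra ha)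
    · exact ident _ _
  | k a b => exact HilbertProv.mp (HilbertProv.k _ φ) (HilbertProv.k a b)
  | s a b c => exact HilbertProv.mp (HilbertProv.k _ φ) (HilbertProv.s a b c)
  | andIntro a b => exact HilbertProv.mp (HilbertProv.k _ φ) (HilbertProv.andIntro a b)
  | andElimL a b => exact HilbertProv.mp (HilbertProv.k _ φ) (HilbertProv.andElimL a b)
  | andElimR a b => exact HilbertProv.mp (HilbertProv.k _ φ) (HilbertProv.andElimR a b)
  | orIntroL a b => exact HilbertProv.mp (HilbertProv.k _ φ) (HilbertProv.orIntroL a b)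
  | orIntroR a b => exact HilbertProv.mp (HilbertProv.k _ φ) (HilbertProv.orIntroR a b)
  | orElim a b c => exact HilbertProv.mp (HilbertProv.k _ φ) (HilbertProv.orElim a b c)
  | exFalso a => exact HilbertProv.mp (HilbertProv.k _ φ) (HilbertProv.exFalso a)
  | @mp a b _ _ ih1 ih2 =>
    exact HilbertProv.mp (HilbertProv.mp (HilbertProv.s φ a b) ih1) ih2

end HilbertAux

open HilbertAux in
/-- In intuitionistic propositional logic extended with the linearity axiom
scheme LIN, the formula `(γ → (δ₁ ∨ δ₂)) → ((γ → δ₁) ∨ (γ → δ₂))` is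
provable for all formulas `γ`, `δ₁`, `δ₂`. -/
theorem lin_proves_imp_or_split (γ δ₁ δ₂ : PForm) :
    HilbertProv LINScheme
      (PForm.imp (PForm.imp γ (PForm.or δ₁ δ₂))
        (PForm.or (PForm.imp γ δ₁) (PForm.imp γ δ₂))) := by
  apply deduction
  set Ax₁ := Add LINScheme (imp γ (or δ₁ δ₂)) with hAx₁
  -- the LIN instance (δ₁ → δ₂) ∨ (δ₂ → δ₁)
  have hlin : HilbertProv Ax₁ (or (imp δ₁ δ₂) (imp δ₂ δ₁)) :=
    HilbertProv.extra (Or.inl ⟨δ₁, δ₂, rfl⟩)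
  set G := or (imp γ δ₁) (imp γ δ₂) with hG
  -- case 1: from δ₁ → δ₂ derive γ → δ₂, hence G
  have case1 : HilbertProv Ax₁ (imp (imp δ₁ δ₂) G) := by
    apply deduction
    apply HilbertProv.mp (HilbertProv.orIntroR (imp γ δ₁) (imp γ δ₂))
    apply deduction
    -- context: Ax₁, δ₁ → δ₂, γ ⊢ δ₂
    have hd : HilbertProv (Add (Add Ax₁ (imp δ₁ δ₂)) γ) (or δ₁ δ₂) :=
      HilbertProv.mp (weaken (weaken (hyp LINScheme _))) (hyp _ γ)
    exact HilbertProv.mp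
      (HilbertProv.mp
        (HilbertProv.mp (HilbertProv.orElim δ₁ δ₂ δ₂) (weaken (hyp Ax₁ (imp δ₁ δ₂))))
        (ident _ δ₂)) hd
  -- case 2: from δ₂ → δ₁ derive γ → δ₁, hence G
  have case2 : HilbertProv Ax₁ (imp (imp δ₂ δ₁) G) := by
    apply deduction
    apply HilbertProv.mp (HilbertProv.orIntroL (imp γ δ₁) (imp γ δ₂))
    apply deduction
    have hd : HilbertProv (Add (Add Ax₁ (imp δ₂ δ₁)) γ) (or δ₁ δ₂) :=
      HilbertProv.mp (weaken (weaken (hyp LINScheme _))) (hyp _ γ)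
    exact HilbertProv.mp
      (HilbertProv.mp
        (HilbertProv.mp (HilbertProv.orElim δ₁ δ₂ δ₁) (ident _ δ₁))
        (weaken (hyp Ax₁ (imp δ₂ δ₁)))) hd
  exact HilbertProv.mp (HilbertProv.mp (HilbertProv.mp
    (HilbertProv.orElim (imp δ₁ δ₂) (imp δ₂ δ₁) G) case1) case2) hlin
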